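/- Let (aₙ) ∈ ℓ¹ with ‖(aₙ)‖₁ = 1 and 1/2 < sup_n |aₙ| < 1. Then the hyperplane Y = ker((aₙ)) in c₀ (kernel of the functional x ↦ Σ aₙ xₙ) does not have property-(HB) in c₀: the metric projection P_{Y⊥} onto Y⊥ = span{(aₙ)} in ℓ¹, given by P_{Y⊥}((xₙ)) = (x_N/a_N)(a₁, a₂, …) where N is the unique index with |a_N| > 1/2, has norm strictly greater than 1. -/

import Mathlib

open NormedSpace Metric Set

namespace Paper

variable {X : Type*} [NormedAddCommGroup X] [NormedSpace ℝ X]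

/-- The restriction of a continuous linear functional to a subspace. -/
noncomputable def restr (Y : Submodule ℝ X) (f : StrongDual ℝ X) : StrongDual ℝ ↥Y :=
  f.comp Y.subtypeL

/-- The annihilator `Y⊥` of a subspace `Y` in the dual. -/
def ann (Y : Submodule ℝ X) : Set (StrongDual ℝ X) := {f | ∀ y ∈ Y, f y = 0}

/-- The set of norm-preserving (Hahn–Banach) extensions of `g : Y* ` to `X`. -/
def HB (Y : Submodule ℝ X) (g : StrongDual ℝ ↥Y) : Set (StrongDual ℝ X) :=
  {f | (∀ y : Y, f (y : X) = g y) ∧ ‖f‖ = ‖g‖}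

/-- Best approximations to `x` from a set `A`. -/
def bestApprox {E : Type*} [NormedAddCommGroup E] (A : Set E) (x : E) : Set E :=
  {z ∈ A | ‖x - z‖ = infDist x A}

/-- Property-(U): every functional on `Y` has a unique norm-preserving extension to `X`. -/
def propU (Y : Submodule ℝ X) : Prop :=
  ∀ g : StrongDual ℝ ↥Y, ∃! f : StrongDual ℝ X, f ∈ HB Y g

/-- `Y# `: the set of functionals whose norm equals the norm of their restriction to `Y`. -/
def sharp (Y : Submodule ℝ X) : Set (StrongDual ℝ X) := {f | ‖f‖ = ‖restr Y f‖}

/-- Property-(HB), stated via the decomposition `X* = Y# ⊕ Y⊥`. -/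
def propHB (Y : Submodule ℝ X) : Prop :=
  (∀ f ∈ sharp Y, ∀ g ∈ sharp Y, f + g ∈ sharp Y) ∧
  (∀ (c : ℝ), ∀ f ∈ sharp Y, c • f ∈ sharp Y) ∧
  (∀ f : StrongDual ℝ X, ∃ g ∈ sharp Y, ∃ h ∈ ann Y, f = g + h) ∧
  (∀ g ∈ sharp Y, ∀ h ∈ ann Y, h ≠ 0 → ‖g‖ < ‖g + h‖ ∧ ‖h‖ ≤ ‖g + h‖)

end Paper

open Paper

open ZeroAtInfty Filter

noncomputable def c0fin (u : ℕ → ℝ) (F : Finset ℕ) (hu : ∀ n ∉ F, u n = 0) : C₀(ℕ, ℝ) :=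
  ⟨⟨u, continuous_of_discreteTopology⟩, by
    rw [cocompact_eq_cofinite]
    refine tendsto_const_nhds.congr' ?_
    have : {n : ℕ | u n ≠ 0} ⊆ F := fun n hn => by by_contra h; exact hn (hu n h)
    exact (F.finite_toSet.subset this).eventually_cofinite_notMem.mono fun n hn => by
      simpa using (not_not.mp (fun h => hn h)).symm⟩

@[simp] lemma c0fin_apply (u : ℕ → ℝ) (F : Finset ℕ) (hu : ∀ n ∉ F, u n = 0) (n : ℕ) :
    c0fin u F hu n = u n := rfl

lemma c0fin_norm_le (u : ℕ → ℝ) (F : Finset ℕ) (hu : ∀ n ∉ F, u n = 0)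
    (h1 : ∀ n, |u n| ≤ 1) : ‖c0fin u F hu‖ ≤ 1 := by
  rw [← ZeroAtInftyContinuousMap.norm_toBCF_eq_norm]
  exact BoundedContinuousFunction.norm_le (by norm_num) |>.mpr fun n => by
    simpa [Real.norm_eq_abs] using h1 n

noncomputable def ev (N : ℕ) : StrongDual ℝ C₀(ℕ, ℝ) :=
  LinearMap.mkContinuous
    { toFun := fun x => x N, map_add' := fun x y => rfl, map_smul' := fun c x => rfl }
    1 (fun x => by
      simp only [one_mul, LinearMap.coe_mk, AddHom.coe_mk]
      rw [← ZeroAtInftyContinuousMap.norm_toBCF_eq_norm]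
      exact BoundedContinuousFunction.norm_coe_le_norm x.toBCF N)

@[simp] lemma ev_apply (N : ℕ) (x : C₀(ℕ, ℝ)) : ev N x = x N := rfl

lemma sign_mul_eq_abs (x : ℝ) : Real.sign x * x = |x| := by
  rcases lt_trichotomy x 0 with h | h | h
  · rw [Real.sign_of_neg h, abs_of_neg h]; ring
  · simp [h]
  · rw [Real.sign_of_pos h, abs_of_pos h]; ring

lemma abs_sign_le_one (x : ℝ) : |Real.sign x| ≤ 1 := by
  rcases Real.sign_apply_eq x with h | h | h <;> simp [h]

section Bounds
variable (a : lp (fun _ : ℕ => ℝ) 1) (f : StrongDual ℝ C₀(ℕ, ℝ))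
  (hf : ∀ x : C₀(ℕ, ℝ), f x = ∑' n, a n * x n) (N : ℕ)

include hf in
lemma f_fin (u : ℕ → ℝ) (F : Finset ℕ) (hu : ∀ n ∉ F, u n = 0) :
    f (c0fin u F hu) = ∑ n ∈ F, a n * u n := by
  rw [hf]
  exact tsum_eq_sum (fun n hn => by simp [hu n hn])

include hf in
lemma lbB (c : ℝ) (F : Finset ℕ) : ∑ n ∈ F, |c| * |a n| ≤ ‖c • f‖ := by
  set u : ℕ → ℝ := fun n => if n ∈ F then Real.sign (c * a n) else 0 with hu
  have hu0 : ∀ n ∉ F, u n = 0 := fun n hn => by simp [hu, hn]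
  set x := c0fin u F hu0 with hx
  have hxn : ‖x‖ ≤ 1 := c0fin_norm_le _ _ _ fun n => by
    by_cases h : n ∈ F <;> simp [hu, h, abs_sign_le_one]
  have hval : (c • f) x = ∑ n ∈ F, |c| * |a n| := by
    rw [ContinuousLinearMap.smul_apply, f_fin a f hf, smul_eq_mul, Finset.mul_sum]
    refine Finset.sum_congr rfl fun n hn => ?_
    simp only [hu, c0fin_apply, if_pos hn]
    rw [show c * (a n * Real.sign (c * a n)) = Real.sign (c * a n) * (c * a n) by ring,
      sign_mul_eq_abs, abs_mul]
  calc ∑ n ∈ F, |c| * |a n| = (c • f) x := hval.symm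
    _ ≤ |(c • f) x| := le_abs_self _
    _ ≤ ‖c • f‖ * ‖x‖ := (c • f).le_opNorm x
    _ ≤ ‖c • f‖ * 1 := mul_le_mul_of_nonneg_left hxn (ContinuousLinearMap.opNorm_nonneg _)
    _ = ‖c • f‖ := mul_one _

include hf in
lemma lbA (c : ℝ) (F : Finset ℕ) :
    |1 - c * a N| + ∑ n ∈ F, |c| * (if n = N then 0 else |a n|) ≤ ‖ev N - c • f‖ := by
  have hsum : ∑ n ∈ F, |c| * (if n = N then 0 else |a n|)
      = ∑ n ∈ F.erase N, |c| * |a n| := by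
    rw [← Finset.sum_erase (f := fun n => |c| * (if n = N then 0 else |(a : ℕ → ℝ) n|))
      (a := N) F (by simp)]
    exact Finset.sum_congr rfl fun n hn => by rw [if_neg (Finset.mem_erase.mp hn).1]
  rw [hsum]
  set s : ℝ := Real.sign (1 - c * a N) with hs
  set u : ℕ → ℝ := fun n => if n = N then s else if n ∈ F then -Real.sign (c * a n) else 0 with hu
  set G : Finset ℕ := insert N (F.erase N) with hG
  have hu0 : ∀ n ∉ G, u n = 0 := by
    intro n hn
    rw [hG, Finset.mem_insert] at hn
    push_neg at hn
    obtain ⟨h1, h2⟩ := hn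
    rw [Finset.mem_erase] at h2
    push_neg at h2
    simp [hu, h1, h2 h1]
  set x := c0fin u G hu0 with hx
  have hxn : ‖x‖ ≤ 1 := c0fin_norm_le _ _ _ fun n => by
    by_cases h : n = N
    · simp [hu, h, hs, abs_sign_le_one]
    · by_cases h2 : n ∈ F <;> simp [hu, h, h2, abs_sign_le_one]
  have hval : (ev N - c • f) x = |1 - c * a N| + ∑ n ∈ F.erase N, |c| * |a n| := by
    rw [ContinuousLinearMap.sub_apply, ContinuousLinearMap.smul_apply, f_fin a f hf,
      ev_apply]
    have hxN : x N = s := by simp [hx, hu]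
    have hterm : ∀ n ∈ F.erase N, a n * u n = -(Real.sign (c * a n) * a n) := by
      intro n hn
      obtain ⟨h1, h2⟩ := Finset.mem_erase.mp hn
      simp only [hu, if_neg h1, if_pos h2]
      ring
    have huN : u N = s := by simp [hu]
    rw [hxN, smul_eq_mul, Finset.sum_insert (Finset.notMem_erase N F), huN,
      Finset.sum_congr rfl hterm, Finset.sum_neg_distrib]
    have expand : s - c * (a N * s + -∑ n ∈ F.erase N, Real.sign (c * a n) * a n)
        = s * (1 - c * a N) + ∑ n ∈ F.erase N, c * (Real.sign (c * a n) * a n) := by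
      rw [← Finset.mul_sum]
      ring
    rw [expand, show s * (1 - c * a N) = |1 - c * a N| from sign_mul_eq_abs _]
    congr 1
    refine Finset.sum_congr rfl fun n _ => ?_
    rw [show c * (Real.sign (c * a n) * a n) = Real.sign (c * a n) * (c * a n) by ring,
      sign_mul_eq_abs, abs_mul]
  calc |1 - c * a N| + ∑ n ∈ F.erase N, |c| * |a n| = (ev N - c • f) x := hval.symm
    _ ≤ |(ev N - c • f) x| := le_abs_self _
    _ ≤ ‖ev N - c • f‖ * ‖x‖ := (ev N - c • f).le_opNorm x
    _ ≤ ‖ev N - c • f‖ * 1 := mul_le_mul_of_nonneg_left hxn (ContinuousLinearMap.opNorm_nonneg _)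
    _ = ‖ev N - c • f‖ := mul_one _

end Bounds

section Sums
variable (a : lp (fun _ : ℕ => ℝ) 1)

lemma hasSum_abs (ha1 : ‖a‖ = 1) : HasSum (fun n => |a n|) 1 := by
  have h := lp.hasSum_norm (p := 1) (by norm_num) a
  simpa [ha1, Real.norm_eq_abs] using h

lemma hasSum_v (ha1 : ‖a‖ = 1) (N : ℕ) :
    HasSum (fun n => if n = N then 0 else |a n|) (1 - |a N|) := by
  have h := (hasSum_abs a ha1).sub (hasSum_ite_eq N |a N|)
  have he : (fun n => |a n| - if n = N then |a N| else 0)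
      = fun n => if n = N then 0 else |a n| := by
    funext n; by_cases hn : n = N <;> simp [hn]
  exact he ▸ h

lemma ub (ha1 : ‖a‖ = 1) (f : StrongDual ℝ C₀(ℕ, ℝ))
    (hf : ∀ x : C₀(ℕ, ℝ), f x = ∑' n, a n * x n) (N : ℕ) (hNne : a N ≠ 0) :
    ‖ev N - (a N)⁻¹ • f‖ ≤ (1 - |a N|) / |a N| := by
  have habs := hasSum_abs a ha1
  have hsum : Summable (fun n => |a n|) := habs.summable
  have haN1 : |a N| ≤ 1 := le_hasSum habs N (fun _ _ => abs_nonneg _)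
  have haNpos : 0 < |a N| := abs_pos.mpr hNne
  refine ContinuousLinearMap.opNorm_le_bound _
    (div_nonneg (by linarith) (abs_nonneg _)) fun x => ?_
  have hx : ∀ n, |x n| ≤ ‖x‖ := fun n => by
    rw [← ZeroAtInftyContinuousMap.norm_toBCF_eq_norm]
    exact x.toBCF.norm_coe_le_norm n
  have hsx : Summable (fun n => a n * x n) := by
    refine Summable.of_norm (Summable.of_nonneg_of_le (fun n => norm_nonneg _)
      (fun n => ?_) (hsum.mul_right ‖x‖))
    rw [Real.norm_eq_abs, abs_mul]
    exact mul_le_mul_of_nonneg_left (hx n) (abs_nonneg _)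
  rw [ContinuousLinearMap.sub_apply, ContinuousLinearMap.smul_apply, hf, ev_apply,
    smul_eq_mul, hsx.tsum_eq_add_tsum_ite N]
  set R : ℝ := ∑' n, if n = N then 0 else a n * x n with hR
  have hkey : x N - (a N)⁻¹ * (a N * x N + R) = -((a N)⁻¹ * R) := by
    field_simp
    ring
  rw [hkey, norm_neg, Real.norm_eq_abs, abs_mul, abs_inv]
  have hsit : Summable (fun n => ‖if n = N then 0 else a n * x n‖) := by
    refine Summable.of_nonneg_of_le (fun n => norm_nonneg _) (fun n => ?_)
      ((hasSum_v a ha1 N).summable.mul_right ‖x‖)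
    by_cases hn : n = N
    · simp [hn]
    · rw [if_neg hn, if_neg hn, Real.norm_eq_abs, abs_mul]
      exact mul_le_mul_of_nonneg_left (hx n) (abs_nonneg _)
  have hRle : |R| ≤ (1 - |a N|) * ‖x‖ := by
    calc |R| ≤ ∑' n, ‖if n = N then 0 else a n * x n‖ := by
          rw [hR, ← Real.norm_eq_abs]
          exact norm_tsum_le_tsum_norm hsit
      _ ≤ ∑' n, (if n = N then 0 else |a n|) * ‖x‖ := by
          refine Summable.tsum_le_tsum (fun n => ?_) hsit ((hasSum_v a ha1 N).summable.mul_right ‖x‖)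
          by_cases hn : n = N
          · simp [hn]
          · rw [if_neg hn, if_neg hn, Real.norm_eq_abs, abs_mul]
            exact mul_le_mul_of_nonneg_left (hx n) (abs_nonneg _)
      _ = (1 - |a N|) * ‖x‖ := by
          rw [tsum_mul_right, (hasSum_v a ha1 N).tsum_eq]
  calc |a N|⁻¹ * |R| ≤ |a N|⁻¹ * ((1 - |a N|) * ‖x‖) :=
        mul_le_mul_of_nonneg_left hRle (by positivity)
    _ = (1 - |a N|) / |a N| * ‖x‖ := by field_simp

end Sums

section Restr
open Paper
variable {X : Type*} [NormedAddCommGroup X] [NormedSpace ℝ X]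

lemma norm_restr_le (Y : Submodule ℝ X) (φ : StrongDual ℝ X) :
    ‖restr Y φ‖ ≤ ‖φ‖ := by
  refine ContinuousLinearMap.opNorm_le_bound _ (norm_nonneg _) fun y => ?_
  simpa [restr] using φ.le_opNorm (y : X)

lemma restr_sub_smul (f φ : StrongDual ℝ X) (c : ℝ) :
    restr (LinearMap.ker (f : X →ₗ[ℝ] ℝ)) (φ - c • f) = restr (LinearMap.ker (f : X →ₗ[ℝ] ℝ)) φ := by
  ext y
  have : f (y : X) = 0 := LinearMap.mem_ker.mp y.2
  simp [restr, this]

end Restr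


lemma arith_aux (A X T : ℝ) (hA1 : 1 / 2 < A) (hA2 : A < 1)
    (h1 : 1 - T ≤ X) (h2 : T - 1 ≤ X)
    (hkey : X * A + T * (1 - A) ≤ 1 - A) : X ≤ 0 := by
  have hA0 : 0 < A := by linarith
  have hT1 : 1 ≤ T := by nlinarith [mul_le_mul_of_nonneg_right h1 hA0.le]
  have hT2 : T ≤ 1 := by nlinarith [mul_le_mul_of_nonneg_right h2 hA0.le]
  have hT : T = 1 := le_antisymm hT2 hT1
  rw [hT] at hkey
  nlinarith

lemma arith_aux2 (A C : ℝ) (hA0 : 0 < A) (hA : A < 1) (h : C * A = 1) : 1 < C := by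
  nlinarith

set_option maxHeartbeats 1000000 in
/-- for `(aₙ) ∈ ℓ¹` with `‖(aₙ)‖₁ = 1` and `1/2 < sup |aₙ| < 1` (with `N` the
index where `|a_N| > 1/2`), the hyperplane `Y = ker(x ↦ Σ aₙ xₙ)` of `c₀` does not have
property-(HB): indeed the metric projection `x ↦ (x_N/a_N)·a` onto `Y⊥ = span{a} ⊆ ℓ¹` has
norm strictly greater than `1`. -/
theorem stmt12 (a : lp (fun _ : ℕ => ℝ) 1) (ha1 : ‖a‖ = 1)
    (hsup₁ : (1 : ℝ) / 2 < ⨆ n, |a n|) (hsup₂ : (⨆ n, |a n|) < 1)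
    (N : ℕ) (hN : (1 : ℝ) / 2 < |a N|)
    (f : StrongDual ℝ C₀(ℕ, ℝ)) (hf : ∀ x : C₀(ℕ, ℝ), f x = ∑' n, a n * x n) :
    ¬ propHB (LinearMap.ker (f : C₀(ℕ, ℝ) →ₗ[ℝ] ℝ)) ∧
      (∃ x : lp (fun _ : ℕ => ℝ) 1, ‖x‖ ≤ 1 ∧ ‖((x N / a N) : ℝ) • a‖ > 1) := by
  -- basic facts about `a N`
  have haNpos : 0 < |a N| := by linarith
  have haNne : a N ≠ 0 := abs_pos.mp haNpos
  have bdd : BddAbove (Set.range fun n => |a n|) := by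
    refine ⟨‖a‖, fun r hr => ?_⟩
    obtain ⟨n, rfl⟩ := hr
    simpa [Real.norm_eq_abs] using lp.norm_apply_le_norm (by norm_num) a n
  have haN1 : |a N| < 1 := lt_of_le_of_lt (le_ciSup bdd N) hsup₂
  have habs := hasSum_abs a ha1
  constructor
  · -- ¬ propHB
    rintro ⟨-, -, hdec, hord⟩
    set Y := LinearMap.ker (f : C₀(ℕ, ℝ) →ₗ[ℝ] ℝ) with hY
    obtain ⟨g, hg, h, hh, hgh⟩ := hdec (ev N)
    have hg' : ‖g‖ = ‖restr Y g‖ := hg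
    -- x₀ = indicator of N
    have hu0 : ∀ n ∉ ({N} : Finset ℕ), (fun n => if n = N then (1 : ℝ) else 0) n = 0 := by
      intro n hn
      simp only [Finset.mem_singleton] at hn
      simp [hn]
    set x₀ := c0fin _ _ hu0 with hx₀
    have hfx₀ : f x₀ = a N := by
      rw [f_fin a f hf]
      simp
    have hevx₀ : ev N x₀ = 1 := by simp [hx₀]
    have hx₀n : ‖x₀‖ ≤ 1 := c0fin_norm_le _ _ _ fun n => by
      by_cases hn : n = N <;> simp [hn]
    -- norm of ev N
    have hev_le : ‖ev N‖ ≤ 1 := by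
      refine ContinuousLinearMap.opNorm_le_bound _ zero_le_one fun x => ?_
      rw [one_mul, ev_apply, Real.norm_eq_abs, ← ZeroAtInftyContinuousMap.norm_toBCF_eq_norm]
      exact x.toBCF.norm_coe_le_norm N
    have hev_ge : 1 ≤ ‖ev N‖ := by
      calc (1 : ℝ) = ‖ev N x₀‖ := by rw [hevx₀]; simp
        _ ≤ ‖ev N‖ * ‖x₀‖ := (ev N).le_opNorm x₀
        _ ≤ ‖ev N‖ * 1 := mul_le_mul_of_nonneg_left hx₀n (ContinuousLinearMap.opNorm_nonneg _)
        _ = ‖ev N‖ := mul_one _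
    -- h is a multiple of f
    set c : ℝ := h x₀ / a N with hc
    have hcf : h = c • f := by
      ext x
      have hker : f (x - (f x / a N) • x₀) = 0 := by
        rw [map_sub, map_smul, smul_eq_mul, hfx₀]
        field_simp
        ring
      have h0 : h (x - (f x / a N) • x₀) = 0 := hh _ (LinearMap.mem_ker.mpr hker)
      rw [map_sub, map_smul, smul_eq_mul, sub_eq_zero] at h0
      rw [ContinuousLinearMap.smul_apply, smul_eq_mul, h0, hc]
      ring
    -- the restriction of ev N has small norm
    have hrestr_le : ‖restr Y (ev N)‖ ≤ (1 - |a N|) / |a N| := by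
      calc ‖restr Y (ev N)‖ = ‖restr Y (ev N - (a N)⁻¹ • f)‖ := by
            rw [restr_sub_smul]
        _ ≤ ‖ev N - (a N)⁻¹ • f‖ := norm_restr_le _ _
        _ ≤ (1 - |a N|) / |a N| := ub a ha1 f hf N haNne
    have hg_eq : g = ev N - c • f := by rw [hgh, hcf]; abel
    have hrg : restr Y g = restr Y (ev N) := by rw [hg_eq, restr_sub_smul]
    have hgnorm_le : ‖g‖ ≤ (1 - |a N|) / |a N| := by
      rw [hg', hrg]; exact hrestr_le
    by_cases hne : h = 0
    · -- then g = ev N, contradiction with norms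
      have : g = ev N := by rw [hgh, hne, add_zero]
      rw [this] at hgnorm_le
      have : (1 - |a N|) / |a N| < 1 := by
        rw [div_lt_one haNpos]; linarith
      linarith
    · obtain ⟨hlt, hle⟩ := hord g hg h hh hne
      rw [← hgh] at hle
      -- lower bound for ‖g‖
      have hglb : |1 - c * a N| + |c| * (1 - |a N|) ≤ ‖ev N - c • f‖ := by
        have hv2 : HasSum (fun n => |c| * (if n = N then 0 else |a n|))
            (|c| * (1 - |a N|)) := (hasSum_v a ha1 N).mul_left |c|
        exact le_of_tendsto (tendsto_const_nhds.add hv2)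
          (Filter.Eventually.of_forall fun F => lbA a f hf N c F)
      rw [← hg_eq] at hglb
      have hkey := hglb.trans hgnorm_le
      -- arithmetic: conclude c * a N = 1
      have habs1 : 1 - |c * a N| ≤ |1 - c * a N| := by
        simpa using abs_sub_abs_le_abs_sub (1 : ℝ) (c * a N)
      have habs2 : |c * a N| - 1 ≤ |1 - c * a N| := by
        have := abs_sub_abs_le_abs_sub (c * a N) (1 : ℝ)
        simpa [abs_sub_comm] using this
      have hca : |c| * |a N| = |c * a N| := (abs_mul c (a N)).symm
      have hkey2 : (|1 - c * a N| + |c| * (1 - |a N|)) * |a N| ≤ 1 - |a N| := by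
        rw [← le_div_iff₀ haNpos]
        exact hkey
      have hkey3 : |1 - c * a N| * |a N| + |c * a N| * (1 - |a N|) ≤ 1 - |a N| := by
        have e : (|1 - c * a N| + |c| * (1 - |a N|)) * |a N|
            = |1 - c * a N| * |a N| + |c| * |a N| * (1 - |a N|) := by ring
        rw [e, hca] at hkey2
        exact hkey2
      have ht1 : |1 - c * a N| ≤ 0 :=
        arith_aux |a N| |1 - c * a N| |c * a N| hN haN1 habs1 habs2 hkey3
      have ht : c * a N = 1 := by
        have := abs_nonpos_iff.mp ht1
        linarith
      -- then |c| > 1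
      have hcgt : 1 < |c| := by
        refine arith_aux2 |a N| |c| haNpos haN1 ?_
        rw [hca, ht, abs_one]
      -- lower bound for ‖h‖
      have hhlb : |c| ≤ ‖c • f‖ := by
        have hv2 : HasSum (fun n => |c| * |a n|) (|c| * 1) := habs.mul_left |c|
        have := le_of_tendsto hv2 (Filter.Eventually.of_forall fun F => lbB a f hf c F)
        simpa using this
      rw [hcf] at hle
      linarith [hhlb, hle, hev_le]
  · -- the metric projection has norm > 1
    refine ⟨lp.single 1 N 1, ?_, ?_⟩
    · have hns : ‖lp.single (E := fun _ : ℕ => ℝ) 1 N ((fun _ : ℕ => (1 : ℝ)) N)‖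
          = ‖((fun _ : ℕ => (1 : ℝ)) N)‖ := lp.norm_single (E := fun _ : ℕ => ℝ) (p := 1) (by norm_num) N ((fun _ : ℕ => (1 : ℝ)) N)
      simp only [norm_one] at hns
      exact le_of_eq hns
    · have hxN : (lp.single (E := fun _ : ℕ => ℝ) 1 N (1 : ℝ)) N = 1 :=
        lp.single_apply_self 1 N 1
      rw [hxN, norm_smul, ha1, mul_one, Real.norm_eq_abs, abs_div, abs_one]
      rw [gt_iff_lt, lt_div_iff₀ haNpos]
      linarith
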